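/- Let n ≥ 1, 0 < p₁ ≤ 4/n < p₂, λ₁ < 0, λ₂ < 0. There exist constants ε > 0 and C > 0 (depending on n, p₁, p₂, λ₁, λ₂) such that for all reals K, P₁, P₂, M ≥ 0 satisfying P₁ ≤ C(δ)M + δP₂ for appropriate Young-type constants, if E := K/2 + (λ₁/(p₁+2))P₁ + (λ₂/(p₂+2))P₂ satisfies E + C·M < 0, then -2K - nλ₁p₁P₁/(p₁+2) - nλ₂p₂P₂/(p₂+2) ≥ ε·K. -/

import Mathlib

theorem aux_blowup (K P1 P2 M α β δ ε a b : ℝ)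
    (hK : 0 ≤ K) (hP1 : 0 ≤ P1) (hP2 : 0 ≤ P2) (hM : 0 ≤ M)
    (hα : 0 < α) (hε : 0 ≤ ε) (ha : 0 ≤ a)
    (hδ : (4 + 2*ε) * α * δ ≤ (b - 4 - 2*ε) * β)
    (hPineq : P1 ≤ M + δ * P2)
    (hE : K/2 - α*P1 - β*P2 + α*M < 0) :
    -2*K + a*α*P1 + b*β*P2 ≥ ε*K := by
  have h2 : K < 2*(α*P1 + β*P2 - α*M) := by linarith
  have h3 : (2+ε)*K ≤ (2+ε)*(2*(α*P1 + β*P2 - α*M)) :=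
    mul_le_mul_of_nonneg_left h2.le (by linarith)
  have h4 : (4+2*ε)*α*P1 ≤ (4+2*ε)*α*(M + δ*P2) :=
    mul_le_mul_of_nonneg_left hPineq (by positivity)
  have h5 : 0 ≤ a*α*P1 := by positivity
  nlinarith [mul_nonneg hP2 (sub_nonneg.2 hδ)]

theorem stmt_6 (n : ℕ) (hn : 1 ≤ n) (lam1 lam2 p1 p2 : ℝ)
    (hlam1 : lam1 < 0) (hlam2 : lam2 < 0)
    (hp1 : 0 < p1) (hp1' : p1 ≤ 4 / (n : ℝ)) (hp2 : 4 / (n : ℝ) < p2) :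
    ∃ ε > (0 : ℝ), ∃ C > (0 : ℝ), ∃ δ > (0 : ℝ), ∃ Cδ > (0 : ℝ),
      ∀ K P1 P2 M : ℝ, 0 ≤ K → 0 ≤ P1 → 0 ≤ P2 → 0 ≤ M →
        P1 ≤ Cδ * M + δ * P2 →
        K / 2 + (lam1 / (p1 + 2)) * P1 + (lam2 / (p2 + 2)) * P2 + C * M < 0 →
        -2 * K - (n : ℝ) * lam1 * p1 * P1 / (p1 + 2)
            - (n : ℝ) * lam2 * p2 * P2 / (p2 + 2) ≥ ε * K := by
  have hn0 : (0:ℝ) < n := by exact_mod_cast hn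
  have hb : (4:ℝ) < n * p2 := by
    rw [div_lt_iff₀ hn0] at hp2; linarith
  set α : ℝ := -lam1 / (p1 + 2) with hαdef
  set β : ℝ := -lam2 / (p2 + 2) with hβdef
  have hα : 0 < α := by apply div_pos <;> linarith
  have hβ : 0 < β := by
    apply div_pos <;> [linarith; nlinarith [div_nonneg (by norm_num : (0:ℝ) ≤ 4) hn0.le]]
  set ε : ℝ := (n * p2 - 4) / 4 with hεdef
  have hε : 0 < ε := by rw [hεdef]; apply div_pos <;> [linarith; norm_num]
  set δ : ℝ := (n * p2 - 4) * β / ((n * p2 + 4) * α) with hδdef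
  have hδ : 0 < δ := by
    rw [hδdef]
    exact div_pos (mul_pos (by linarith) hβ) (mul_pos (by linarith) hα)
  refine ⟨ε, hε, α, hα, δ, hδ, 1, one_pos, ?_⟩
  intro K P1 P2 M hK hP1 hP2 hM hP hE
  have hδeq : (4 + 2*ε) * α * δ = ((n:ℝ)*p2 - 4 - 2*ε) * β := by
    rw [hδdef, hεdef]
    field_simp
    ring
  have key := aux_blowup K P1 P2 M α β δ ε ((n:ℝ)*p1) ((n:ℝ)*p2) hK hP1 hP2 hM hα hε.le
    (by positivity) hδeq.le (by linarith)
    (by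
      rw [hαdef, hβdef]
      ring_nf
      rw [hαdef] at hE
      ring_nf at hE
      linarith [hE])
  rw [hαdef, hβdef] at key
  have e1 : -((n:ℝ) * lam1 * p1 * P1 / (p1 + 2)) = (n:ℝ)*p1 * (-lam1/(p1+2)) * P1 := by ring
  have e2 : -((n:ℝ) * lam2 * p2 * P2 / (p2 + 2)) = (n:ℝ)*p2 * (-lam2/(p2+2)) * P2 := by ring
  linarith [key]
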